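/- Let f : ℂ → ℂ be continuous with Σ_{k∈ℤ²} sup_{z ∈ k+[0,1]²} |f(z)| < ∞ (so that Z^t f is continuous on ℂ²). Then Z^t f has a zero in Q × Q, i.e., there exists (z, w) ∈ Q × Q with Z^t f(z, w) = 0. -/

import Mathlib

open MeasureTheory Complex
open scoped ENNReal NNReal
noncomputable section

/-- ∂/∂x -/
def pdx (f : ℂ → ℂ) (z : ℂ) : ℂ := fderiv ℝ f z 1
/-- ∂/∂y -/
def pdy (f : ℂ → ℂ) (z : ℂ) : ℂ := fderiv ℝ f z Complex.I
/-- ∂/∂z := ∂/∂x − i ∂/∂y -/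
def pdz (f : ℂ → ℂ) (z : ℂ) : ℂ := pdx f z - Complex.I * pdy f z
/-- ∂/∂z̄ := ∂/∂x + i ∂/∂y -/
def pdzbar (f : ℂ → ℂ) (z : ℂ) : ℂ := pdx f z + Complex.I * pdy f z
/-- Zf(z) = ∂f/∂z + (1/2) z̄ f(z) -/
def Zop (f : ℂ → ℂ) (z : ℂ) : ℂ := pdz f z + (1/2 : ℂ) * (starRingEnd ℂ) z * f z
/-- Z̄f(z) = ∂f/∂z̄ − (1/2) z f(z) -/
def Zbarop (f : ℂ → ℂ) (z : ℂ) : ℂ := pdzbar f z - (1/2 : ℂ) * z * f z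

/-- normalized Hermite functions -/
def hermiteFn (k : ℕ) (x : ℝ) : ℝ :=
  ((2:ℝ)^k * Real.sqrt Real.pi * (Nat.factorial k : ℝ)) ^ (-(1/2 : ℝ)) * (-1:ℝ)^k *
    Real.exp (x^2/2) * iteratedDeriv k (fun t => Real.exp (-t^2)) x

/-- special Hermite functions φ_{m,n} -/
def sphi (m n : ℕ) (z : ℂ) : ℂ :=
  (((2 * Real.pi) ^ (-(1/2:ℝ)) : ℝ) : ℂ) *
    ∫ ξ : ℝ, Complex.exp (Complex.I * ξ * z.re) *
      (hermiteFn m (ξ + z.im/2) : ℂ) * (hermiteFn n (ξ - z.im/2) : ℂ)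

/-- special Hermite operator L -/
def Lop (f : ℂ → ℂ) (z : ℂ) : ℂ :=
  -(pdx (pdx f) z + pdy (pdy f) z) + (1/4 : ℂ) * ((‖z‖^2 : ℝ) : ℂ) * f z
    - Complex.I * ((z.re : ℂ) * pdy f z - (z.im : ℂ) * pdx f z)

/-- Gaussian integer associated to k ∈ ℤ² -/
def gint (k : ℤ × ℤ) : ℂ := (k.1 : ℂ) + (k.2 : ℂ) * Complex.I

/-- twisted translation -/
def Tt (m n : ℤ) (f : ℂ → ℂ) (z : ℂ) : ℂ :=
  Complex.exp (2 * Real.pi * Complex.I * ((n : ℂ) * z.re - (m : ℂ) * z.im)) *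
    f (z - ((m : ℂ) + (n : ℂ) * Complex.I))

/-- twisted Zak transform -/
def Zak (f : ℂ → ℂ) (z w : ℂ) : ℂ :=
  ∑' k : ℤ × ℤ, f (z - gint k) *
    Complex.exp (2 * Real.pi * Complex.I * (((w * (starRingEnd ℂ) (gint k)).im : ℝ) : ℂ))

/-- the cell k + [0,1]² -/
def cell (k : ℤ × ℤ) : Set ℂ :=
  {z : ℂ | z.re ∈ Set.Icc (k.1 : ℝ) (k.1 + 1) ∧ z.im ∈ Set.Icc (k.2 : ℝ) (k.2 + 1)}

/-- amalgam local sup norm -/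
def amalgamNorm (f : ℂ → ℂ) (k : ℤ × ℤ) : ℝ := sSup ((fun z => ‖f z‖) '' cell k)

/-- unit square Q = [0,1) × [0,1) -/
def Qset : Set ℂ := {z : ℂ | z.re ∈ Set.Ico (0:ℝ) 1 ∧ z.im ∈ Set.Ico (0:ℝ) 1}

/-- frame condition with bounds A, B on a sub-collection S of twisted translates of g -/
def IsTwistedFrameOn (g : ℂ → ℂ) (S : Set (ℤ × ℤ)) (A B : ℝ) : Prop :=
  ∀ f : ℂ → ℂ, MemLp f 2 (volume : Measure ℂ) →
    A * ∫ z : ℂ, ‖f z‖^2 ≤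
        (∑' k : S, ‖∫ z : ℂ, f z * (starRingEnd ℂ) (Tt (k : ℤ × ℤ).1 (k : ℤ × ℤ).2 g z)‖^2) ∧
    (∑' k : S, ‖∫ z : ℂ, f z * (starRingEnd ℂ) (Tt (k : ℤ × ℤ).1 (k : ℤ × ℤ).2 g z)‖^2) ≤
        B * ∫ z : ℂ, ‖f z‖^2

/-- the twisted Gabor system of g is a frame for L²(ℂ) -/
def IsTwistedFrame (g : ℂ → ℂ) : Prop :=
  ∃ A B : ℝ, 0 < A ∧ 0 < B ∧ IsTwistedFrameOn g Set.univ A B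

/-- exact frame: a frame that ceases to be a frame upon deletion of any single element -/
def IsExactTwistedFrame (g : ℂ → ℂ) : Prop :=
  IsTwistedFrame g ∧
    ∀ k₀ : ℤ × ℤ, ¬ ∃ A B : ℝ, 0 < A ∧ 0 < B ∧ IsTwistedFrameOn g ({k₀}ᶜ) A B



-- ===== auxiliary lemmas =====
section ZakAux
open Real


-- ratio close to 1 has |arg| < π/2
lemma arg_small {r : ℂ} (h : ‖r - 1‖ ≤ 1/2) : |r.arg| < π/2 := by
  have hre : (1:ℝ)/2 ≤ r.re := by
    have := Complex.abs_re_le_norm (r - 1)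
    rw [Complex.sub_re, Complex.one_re] at this
    have : |r.re - 1| ≤ 1/2 := le_trans this h
    have := abs_le.1 this
    linarith [this.1]
  exact Complex.abs_arg_lt_pi_div_two_iff.2 (Or.inl (by linarith))

lemma ratio_ne {r : ℂ} (h : ‖r - 1‖ ≤ 1/2) : r ≠ 0 := by
  intro h0
  rw [h0] at h
  simp at h
  linarith

-- log of exp(θI) * r
lemma log_unit_mul {r : ℂ} {θ : ℝ} (hr : r ≠ 0) (h1 : -π < θ + r.arg) (h2 : θ + r.arg ≤ π) :
    Complex.log (Complex.exp (θ * Complex.I) * r) = θ * Complex.I + Complex.log r := by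
  have h3 : (θ * Complex.I + Complex.log r).im = θ + r.arg := by
    simp [Complex.add_im, Complex.log_im]
  rw [show Complex.exp (θ * Complex.I) * r = Complex.exp (θ * Complex.I + Complex.log r) by
    rw [Complex.exp_add, Complex.exp_log hr]]
  rw [Complex.log_exp (by rw [h3]; exact h1) (by rw [h3]; exact h2)]

-- the square identity
lemma square_log {a b c d : ℂ} (hab : ‖b/a - 1‖ ≤ 1/2) (hbc : ‖c/b - 1‖ ≤ 1/2)
    (had : ‖d/a - 1‖ ≤ 1/2) (hdc : ‖c/d - 1‖ ≤ 1/2) (ha : a ≠ 0) (hb : b ≠ 0) (hd : d ≠ 0) :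
    Complex.log (b/a) + Complex.log (c/b) = Complex.log (d/a) + Complex.log (c/d) := by
  have hexp : Complex.exp (Complex.log (b/a) + Complex.log (c/b)) =
      Complex.exp (Complex.log (d/a) + Complex.log (c/d)) := by
    rw [Complex.exp_add, Complex.exp_add, Complex.exp_log (ratio_ne hab),
      Complex.exp_log (ratio_ne hbc), Complex.exp_log (ratio_ne had),
      Complex.exp_log (ratio_ne hdc)]
    field_simp
  obtain ⟨n, hn⟩ := Complex.exp_eq_exp_iff_exists_int.1 hexp
  have him := congrArg Complex.im hn
  simp only [Complex.add_im, Complex.log_im] at him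
  have h1 := arg_small hab
  have h2 := arg_small hbc
  have h3 := arg_small had
  have h4 := arg_small hdc
  have hn2 : ((n : ℂ) * (2 * π * Complex.I)).im = n * (2 * π) := by
    simp
  rw [hn2] at him
  have hpi : 0 < π := Real.pi_pos
  have habs : |(n:ℝ)| * (2*π) < 2 * π := by
    have heq : (n:ℝ) * (2*π) = ((b/a).arg + (c/b).arg) - ((d/a).arg + (c/d).arg) := by linarith
    have h5 : |((b/a).arg + (c/b).arg) - ((d/a).arg + (c/d).arg)| < 2*π := by
      have e1 := abs_add_le (b/a).arg (c/b).arg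
      have e2 := abs_add_le (d/a).arg (c/d).arg
      have e3 := abs_sub ((b/a).arg + (c/b).arg) ((d/a).arg + (c/d).arg)
      linarith
    calc |(n:ℝ)| * (2*π) = |(n:ℝ)| * |2*π| := by rw [abs_of_pos (show (0:ℝ) < 2*π from by positivity)]
    _ = |(n:ℝ) * (2*π)| := (abs_mul _ _).symm
    _ = |((b/a).arg + (c/b).arg) - ((d/a).arg + (c/d).arg)| := by rw [heq]
    _ < 2*π := h5
  have hn0 : n = 0 := by
    by_contra hne
    have : (1:ℝ) ≤ |(n:ℝ)| := by
      rw [← Int.cast_abs]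
      exact_mod_cast Int.one_le_abs (by omega)
    nlinarith
  rw [hn0] at hn
  simpa using hn

lemma grid_contradiction (G : ℝ → ℝ → ℂ)
    (hc : ContinuousOn (fun p : ℝ × ℝ => G p.1 p.2) (Set.Icc 0 1 ×ˢ Set.Icc 0 1))
    (h0 : ∀ s t, G s t ≠ 0)
    (hper : ∀ s, G s 1 = G s 0)
    (hqp : ∀ t, G 1 t = Complex.exp (2 * π * Complex.I * t) * G 0 t) : False := by
  classical
  set K : Set (ℝ × ℝ) := Set.Icc 0 1 ×ˢ Set.Icc 0 1 with hK
  have hKc : IsCompact K := (isCompact_Icc).prod isCompact_Icc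
  have hKne : K.Nonempty := ⟨(0,0), by constructor <;> constructor <;> norm_num⟩
  -- minimum of ‖G‖ on K
  obtain ⟨p₀, hp₀K, hmin⟩ := hKc.exists_isMinOn hKne (hc.norm)
  set ε : ℝ := ‖G p₀.1 p₀.2‖ with hε
  have hεpos : 0 < ε := norm_pos_iff.2 (h0 _ _)
  have hlow : ∀ p ∈ K, ε ≤ ‖G p.1 p.2‖ := fun p hp => hmin hp
  -- uniform continuity on K
  have huc : UniformContinuousOn (fun p : ℝ × ℝ => G p.1 p.2) K :=
    hKc.uniformContinuousOn_of_continuous hc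
  rw [Metric.uniformContinuousOn_iff] at huc
  obtain ⟨δ, hδpos, hδ⟩ := huc (ε/2) (by linarith)
  -- choose N
  obtain ⟨N, hN⟩ := exists_nat_gt (max 4 (2/δ))
  have hN4 : (4:ℝ) < N := lt_of_le_of_lt (le_max_left _ _) hN
  have hNδ : 2/δ < N := lt_of_le_of_lt (le_max_right _ _) hN
  have hNpos : (0:ℝ) < N := by linarith
  have hNne : (N:ℝ) ≠ 0 := ne_of_gt hNpos
  have h1N : 1/(N:ℝ) < δ := by
    rw [div_lt_iff₀ hNpos]
    rw [div_lt_iff₀ hδpos] at hNδ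
    linarith
  set x : ℕ → ℝ := fun i => (i:ℝ)/N with hx
  have hxK : ∀ i : ℕ, i ≤ N → x i ∈ Set.Icc (0:ℝ) 1 := by
    intro i hi
    constructor
    · positivity
    · rw [div_le_one hNpos]; exact_mod_cast hi
  -- ratio bound
  have hrat : ∀ i j i' j' : ℕ, i ≤ N → j ≤ N → i' ≤ N → j' ≤ N →
      |x i' - x i| ≤ 1/N → |x j' - x j| ≤ 1/N →
      ‖G (x i') (x j') / G (x i) (x j) - 1‖ ≤ 1/2 := by
    intro i j i' j' hi hj hi' hj' hdi hdj
    have hm1 : (x i, x j) ∈ K := ⟨hxK i hi, hxK j hj⟩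
    have hm2 : (x i', x j') ∈ K := ⟨hxK i' hi', hxK j' hj'⟩
    have hd : dist ((x i', x j') : ℝ × ℝ) (x i, x j) < δ := by
      rw [Prod.dist_eq]
      apply max_lt <;> rw [Real.dist_eq] <;>
        [exact lt_of_le_of_lt hdi h1N; exact lt_of_le_of_lt hdj h1N]
    have hclose := hδ _ hm2 _ hm1 hd
    rw [dist_eq_norm] at hclose
    have hG : G (x i) (x j) ≠ 0 := h0 _ _
    have : G (x i') (x j') / G (x i) (x j) - 1 =
        (G (x i') (x j') - G (x i) (x j)) / G (x i) (x j) := by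
      field_simp
    rw [this, norm_div]
    rw [div_le_div_iff₀ (norm_pos_iff.2 hG) (by norm_num : (0:ℝ) < 2)]
    have := hlow _ hm1
    calc ‖G (x i') (x j') - G (x i) (x j)‖ * 2 ≤ (ε/2) * 2 := by nlinarith [norm_nonneg (G (x i') (x j') - G (x i) (x j))]
    _ = ε := by ring
    _ ≤ 1 * ‖G (x i) (x j)‖ := by linarith
  -- grid edge logarithms
  set e1 : ℕ → ℕ → ℂ := fun i j => Complex.log (G (x (i+1)) (x j) / G (x i) (x j)) with he1
  set e2 : ℕ → ℕ → ℂ := fun i j => Complex.log (G (x i) (x (j+1)) / G (x i) (x j)) with he2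
  have hxd : ∀ i : ℕ, x (i+1) - x i = 1/N := by
    intro i
    have h' : x (i+1) - x i = (((i:ℝ)+1) - i)/N := by
      simp only [hx]; push_cast; ring
    rw [h']
    norm_num
  have hadj : ∀ i : ℕ, |x (i+1) - x i| ≤ 1/N := by
    intro i; rw [hxd i, abs_of_pos (by positivity)]
  have hself : ∀ i : ℕ, |x i - x i| ≤ 1/N := by
    intro i; simp only [sub_self, abs_zero]; positivity
  have hrat1 : ∀ i j : ℕ, i < N → j ≤ N → ‖G (x (i+1)) (x j) / G (x i) (x j) - 1‖ ≤ 1/2 :=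
    fun i j hi hj => hrat i j (i+1) j (le_of_lt hi) hj (by omega) hj (hadj i) (hself j)
  have hrat2 : ∀ i j : ℕ, i ≤ N → j < N → ‖G (x i) (x (j+1)) / G (x i) (x j) - 1‖ ≤ 1/2 :=
    fun i j hi hj => hrat i j i (j+1) hi (le_of_lt hj) hi (by omega) (hself i) (hadj j)
  -- square identity
  have hsq : ∀ i j : ℕ, i < N → j < N →
      e1 i j + e2 (i+1) j = e2 i j + e1 i (j+1) := by
    intro i j hi hj
    have hratbc : ‖G (x (i+1)) (x (j+1)) / G (x (i+1)) (x j) - 1‖ ≤ 1/2 :=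
      hrat2 (i+1) j (by omega) hj
    have hratdc : ‖G (x (i+1)) (x (j+1)) / G (x i) (x (j+1)) - 1‖ ≤ 1/2 :=
      hrat1 i (j+1) hi (by omega)
    exact square_log (hrat1 i j hi (le_of_lt hj)) hratbc (hrat2 i j (le_of_lt hi) hj)
      hratdc (h0 _ _) (h0 _ _) (h0 _ _)
  -- row sums
  set R : ℕ → ℂ := fun j => ∑ i ∈ Finset.range N, e1 i j with hR
  have hRstep : ∀ j : ℕ, j < N → R (j+1) - R j = e2 N j - e2 0 j := by
    intro j hj
    have : R (j+1) - R j = ∑ i ∈ Finset.range N, (e1 i (j+1) - e1 i j) := by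
      rw [Finset.sum_sub_distrib]
    rw [this]
    rw [show ∑ i ∈ Finset.range N, (e1 i (j+1) - e1 i j)
        = ∑ i ∈ Finset.range N, (e2 (i+1) j - e2 i j) from
      Finset.sum_congr rfl (fun i hi => by
        have := hsq i j (Finset.mem_range.1 hi) hj
        linear_combination -this)]
    exact Finset.sum_range_sub (fun i => e2 i j) N
  have hxN : x N = 1 := by simp only [hx]; field_simp
  have hx0 : x 0 = 0 := by simp [hx]
  have hRN : R N = R 0 := by
    apply Finset.sum_congr rfl
    intro i _
    simp only [he1, hxN, hx0, hper]
  -- column shift identity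
  have hθpos : 0 < 2*π/N := by positivity
  have hθlt : 2*π/N < π/2 := by
    rw [div_lt_iff₀ hNpos]
    nlinarith [Real.pi_pos]
  have hqp' : ∀ t, G (x N) t = Complex.exp (2 * ↑π * Complex.I * ↑t) * G (x 0) t := by
    intro t; rw [hxN, hx0]; exact hqp t
  have hshift : ∀ j : ℕ, j < N → e2 N j = ((2*π/N : ℝ) : ℂ) * Complex.I + e2 0 j := by
    intro j hj
    have hr0 : G (x 0) (x (j+1)) / G (x 0) (x j) ≠ 0 := div_ne_zero (h0 _ _) (h0 _ _)
    have harg : |(G (x 0) (x (j+1)) / G (x 0) (x j)).arg| < π/2 :=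
      arg_small (hrat2 0 j (by omega) hj)
    have hexp_eq : Complex.exp (2 * ↑π * Complex.I * ↑(x (j+1))) /
        Complex.exp (2 * ↑π * Complex.I * ↑(x j))
        = Complex.exp (((2*π/N : ℝ) : ℂ) * Complex.I) := by
      rw [← Complex.exp_sub]
      congr 1
      rw [show (2:ℂ) * ↑π * Complex.I * ↑(x (j+1)) - 2 * ↑π * Complex.I * ↑(x j)
          = 2 * ↑π * Complex.I * (↑(x (j+1)) - ↑(x j)) from by ring]
      rw [← Complex.ofReal_sub, hxd j]
      push_cast
      ring
    have hratio : G (x N) (x (j+1)) / G (x N) (x j) =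
        Complex.exp (((2*π/N : ℝ) : ℂ) * Complex.I) * (G (x 0) (x (j+1)) / G (x 0) (x j)) := by
      rw [hqp' (x (j+1)), hqp' (x j), mul_div_mul_comm, hexp_eq]
    calc e2 N j = Complex.log (Complex.exp (((2*π/N : ℝ) : ℂ) * Complex.I) *
          (G (x 0) (x (j+1)) / G (x 0) (x j))) := by rw [← hratio]
    _ = ((2*π/N : ℝ) : ℂ) * Complex.I + Complex.log (G (x 0) (x (j+1)) / G (x 0) (x j)) := by
        apply log_unit_mul hr0
        · have := abs_lt.1 harg
          linarith [Real.pi_pos]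
        · have := abs_lt.1 harg
          linarith [Real.pi_pos]
    _ = ((2*π/N : ℝ) : ℂ) * Complex.I + e2 0 j := rfl
  -- put it together
  have htot : R N - R 0 = ∑ j ∈ Finset.range N, (e2 N j - e2 0 j) := by
    rw [← Finset.sum_range_sub R]
    exact Finset.sum_congr rfl (fun j hj => hRstep j (Finset.mem_range.1 hj))
  have hzero : (0:ℂ) = ∑ j ∈ Finset.range N, (e2 N j - e2 0 j) := by
    rw [← htot, hRN, sub_self]
  have hval : ∑ j ∈ Finset.range N, (e2 N j - e2 0 j)
      = (N:ℂ) * (((2*π/N : ℝ) : ℂ) * Complex.I) := by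
    have hterm : ∀ j ∈ Finset.range N, e2 N j - e2 0 j = ((2*π/N : ℝ) : ℂ) * Complex.I := by
      intro j hj; rw [hshift j (Finset.mem_range.1 hj)]; ring
    rw [Finset.sum_congr rfl hterm, Finset.sum_const, Finset.card_range, nsmul_eq_mul]
  rw [hval] at hzero
  have : (N:ℂ) * (((2*π/N : ℝ) : ℂ) * Complex.I) = 2 * (π:ℂ) * Complex.I := by
    have hNC : (N:ℂ) ≠ 0 := Nat.cast_ne_zero.2 (show N ≠ 0 by exact_mod_cast hNne)
    push_cast
    field_simp
  rw [this] at hzero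
  have hπ : (π:ℂ) ≠ 0 := Complex.ofReal_ne_zero.2 Real.pi_ne_zero
  have := hzero.symm
  simp only [mul_eq_zero] at this
  rcases this with (h | h)
  · rcases h with (h | h)
    · norm_num at h
    · exact hπ h
  · exact Complex.I_ne_zero h

lemma gint_add (k m : ℤ × ℤ) : gint (k + m) = gint k + gint m := by
  simp only [gint, Prod.fst_add, Prod.snd_add]
  push_cast
  ring

lemma zak_zshift (f : ℂ → ℂ) (z w : ℂ) (m : ℤ × ℤ) :
    Zak f (z + gint m) w =
      Complex.exp (2 * Real.pi * Complex.I * (((w * (starRingEnd ℂ) (gint m)).im : ℝ) : ℂ)) *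
        Zak f z w := by
  unfold Zak
  rw [← tsum_mul_left]
  rw [← Equiv.tsum_eq (Equiv.addRight m) (fun k : ℤ × ℤ => f (z + gint m - gint k) *
    Complex.exp (2 * Real.pi * Complex.I * (((w * (starRingEnd ℂ) (gint k)).im : ℝ) : ℂ)))]
  apply tsum_congr
  intro k
  simp only [Equiv.coe_addRight]
  rw [gint_add k m]
  rw [show z + gint m - (gint k + gint m) = z - gint k by ring]
  rw [show (w * (starRingEnd ℂ) (gint k + gint m)).im
      = (w * (starRingEnd ℂ) (gint k)).im + (w * (starRingEnd ℂ) (gint m)).im by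
    rw [map_add, mul_add, Complex.add_im]]
  rw [Complex.ofReal_add, mul_add, Complex.exp_add]
  ring

lemma zak_wshift (f : ℂ → ℂ) (z w : ℂ) (n : ℤ × ℤ) :
    Zak f z (w + gint n) = Zak f z w := by
  unfold Zak
  apply tsum_congr
  intro k
  congr 1
  have him : ((w + gint n) * (starRingEnd ℂ) (gint k)).im
      = (w * (starRingEnd ℂ) (gint k)).im + ((n.2 * k.1 - n.1 * k.2 : ℤ) : ℝ) := by
    rw [add_mul, Complex.add_im]
    congr 1
    simp only [gint, map_add, map_mul]
    simp [Complex.add_im, Complex.mul_im, Complex.mul_re]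
    push_cast
    ring
  rw [him, Complex.ofReal_add, mul_add, Complex.exp_add]
  rw [show (2 : ℂ) * Real.pi * Complex.I * (((n.2 * k.1 - n.1 * k.2 : ℤ) : ℝ) : ℂ)
      = ((n.2 * k.1 - n.1 * k.2 : ℤ) : ℂ) * (2 * Real.pi * Complex.I) by push_cast; ring]
  rw [Complex.exp_int_mul_two_pi_mul_I]
  ring

lemma cell_isCompact (k : ℤ × ℤ) : IsCompact (cell k) := by
  apply Metric.isCompact_of_isClosed_isBounded
  · have : cell k = Complex.re ⁻¹' Set.Icc (k.1:ℝ) (k.1+1) ∩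
        Complex.im ⁻¹' Set.Icc (k.2:ℝ) (k.2+1) := rfl
    rw [this]
    exact (isClosed_Icc.preimage Complex.continuous_re).inter
      (isClosed_Icc.preimage Complex.continuous_im)
  · rw [Metric.isBounded_iff_subset_closedBall 0]
    refine ⟨|(k.1:ℝ)| + |(k.2:ℝ)| + 2, fun z hz => ?_⟩
    obtain ⟨⟨h1, h2⟩, h3, h4⟩ := hz
    simp only [Metric.mem_closedBall, dist_zero_right]
    calc ‖z‖ ≤ |z.re| + |z.im| := Complex.norm_le_abs_re_add_abs_im z
    _ ≤ (|(k.1:ℝ)| + 1) + (|(k.2:ℝ)| + 1) := by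
        gcongr <;> rw [abs_le] <;> constructor <;>
          [linarith [neg_abs_le ((k.1:ℝ))]; linarith [le_abs_self ((k.1:ℝ))];
           linarith [neg_abs_le ((k.2:ℝ))]; linarith [le_abs_self ((k.2:ℝ))]]
    _ = |(k.1:ℝ)| + |(k.2:ℝ)| + 2 := by ring

lemma norm_le_amalgam {f : ℂ → ℂ} (hf : Continuous f) {z : ℂ} {m : ℤ × ℤ}
    (hz : z ∈ cell m) : ‖f z‖ ≤ amalgamNorm f m :=
  le_csSup ((cell_isCompact m).image hf.norm).bddAbove ⟨z, hz, rfl⟩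

lemma zak_slice_cont (f : ℂ → ℂ) (hf : Continuous f) (hsum : Summable (amalgamNorm f)) :
    ContinuousOn (fun p : ℝ × ℝ => Zak f (p.1 : ℂ) ((p.2 : ℂ) * Complex.I))
      (Set.Icc 0 1 ×ˢ Set.Icc 0 1) := by
  rw [continuousOn_iff_continuous_restrict]
  show Continuous fun q : ↥(Set.Icc (0:ℝ) 1 ×ˢ Set.Icc (0:ℝ) 1) =>
    ∑' k : ℤ × ℤ, f (((q : ℝ × ℝ).1 : ℂ) - gint k) *
      Complex.exp (2 * Real.pi * Complex.I *
        ((((((q : ℝ × ℝ).2 : ℂ) * Complex.I) * (starRingEnd ℂ) (gint k)).im : ℝ) : ℂ))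
  apply continuous_tsum (u := fun k : ℤ × ℤ => amalgamNorm f (-k))
  · intro k
    fun_prop
  · exact hsum.comp_injective neg_injective
  · intro k q
    rw [norm_mul]
    have hexp : ‖Complex.exp (2 * Real.pi * Complex.I *
        ((((((q : ℝ × ℝ).2 : ℂ) * Complex.I) * (starRingEnd ℂ) (gint k)).im : ℝ) : ℂ))‖ = 1 := by
      rw [Complex.norm_exp]
      norm_num [Complex.mul_re, Complex.mul_im]
    rw [hexp, mul_one]
    apply norm_le_amalgam hf
    have hq1 : (q : ℝ × ℝ).1 ∈ Set.Icc (0:ℝ) 1 := q.2.1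
    constructor
    · simp only [Complex.sub_re, Complex.ofReal_re, gint, Complex.add_re, Complex.mul_re,
        Complex.intCast_re, Complex.I_re, Complex.I_im, Complex.intCast_im, Prod.fst_neg]
      push_cast
      constructor <;> [linarith [hq1.1]; linarith [hq1.2]]
    · simp only [Complex.sub_im, Complex.ofReal_im, gint, Complex.add_im, Complex.mul_im,
        Complex.intCast_re, Complex.intCast_im, Complex.I_re, Complex.I_im, Prod.snd_neg]
      push_cast
      constructor <;> norm_num

end ZakAux

-- STATEMENT 11
theorem stmt11 (f : ℂ → ℂ) (hf : Continuous f) (hsum : Summable (amalgamNorm f)) :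
    ∃ z ∈ Qset, ∃ w ∈ Qset, Zak f z w = 0 := by
  by_contra hcon
  push_neg at hcon
  have h0 : ∀ z w : ℂ, Zak f z w ≠ 0 := by
    intro z w
    set mz : ℤ × ℤ := (⌊z.re⌋, ⌊z.im⌋) with hmz
    set nw : ℤ × ℤ := (⌊w.re⌋, ⌊w.im⌋) with hnw
    have hz' : z - gint mz ∈ Qset := by
      have hre : (z - gint mz).re = z.re - ⌊z.re⌋ := by simp [gint, hmz]
      have him : (z - gint mz).im = z.im - ⌊z.im⌋ := by simp [gint, hmz]
      constructor
      · rw [hre]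
        exact ⟨by linarith [Int.floor_le z.re], by linarith [Int.lt_floor_add_one z.re]⟩
      · rw [him]
        exact ⟨by linarith [Int.floor_le z.im], by linarith [Int.lt_floor_add_one z.im]⟩
    have hw' : w - gint nw ∈ Qset := by
      have hre : (w - gint nw).re = w.re - ⌊w.re⌋ := by simp [gint, hnw]
      have him : (w - gint nw).im = w.im - ⌊w.im⌋ := by simp [gint, hnw]
      constructor
      · rw [hre]
        exact ⟨by linarith [Int.floor_le w.re], by linarith [Int.lt_floor_add_one w.re]⟩
      · rw [him]
        exact ⟨by linarith [Int.floor_le w.im], by linarith [Int.lt_floor_add_one w.im]⟩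
    have hkey : Zak f z w = Zak f ((z - gint mz) + gint mz) ((w - gint nw) + gint nw) := by
      norm_num
    rw [hkey, zak_wshift, zak_zshift]
    exact mul_ne_zero (Complex.exp_ne_zero _) (hcon _ hz' _ hw')
  apply grid_contradiction (fun s t : ℝ => Zak f (s : ℂ) ((t : ℂ) * Complex.I))
  · exact zak_slice_cont f hf hsum
  · intro s t
    exact h0 _ _
  · intro s
    show Zak f (s : ℂ) (((1:ℝ) : ℂ) * Complex.I) = Zak f (s : ℂ) (((0:ℝ) : ℂ) * Complex.I)
    have h1 : ((1:ℝ) : ℂ) * Complex.I = ((0:ℝ) : ℂ) * Complex.I + gint (0, 1) := by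
      simp [gint]
    rw [h1, zak_wshift]
  · intro t
    show Zak f (((1:ℝ)) : ℂ) ((t : ℂ) * Complex.I)
        = Complex.exp (2 * Real.pi * Complex.I * (t : ℂ)) *
          Zak f (((0:ℝ)) : ℂ) ((t : ℂ) * Complex.I)
    have h1 : (((1:ℝ)) : ℂ) = (((0:ℝ)) : ℂ) + gint (1, 0) := by simp [gint]
    have h2 : ((((t : ℂ) * Complex.I) * (starRingEnd ℂ) (gint (1, 0))).im : ℝ) = t := by
      simp [gint]
    rw [h1, zak_zshift, h2]
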